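/- arXiv:1112.3602 — 2 statements merged into one kernel-verified Lean document; each statement's English description precedes it below -/
import Mathlib

section
/- Let n, k ∈ ℕ, T = ℝ^n, I = {i ∈ ℤ_+^n : |i| ≤ 2k}, ρ(t) = e^{−‖t‖^{2k}}, and let g = (g_i)_{i∈I} be real numbers with g_0 = 1. Suppose λ* ∈ ℝ^N (N = card I) is a point at which the functional L(λ) = Σ_{|i|≤2k} g_i λ_i − ∫_{ℝ^n} e^{Σ_{|i|≤2k} λ_i t^i} ρ(t) dt attains its finite global maximum. Define f_0(t) = e^{Σ_{|i|≤2k} λ*_i t^i} ρ(t) = exp(Σ_{|i|≤2k} λ*_i t^i − ‖t‖^{2k}). Then f_0 has finite moments of all orders ≤ 2k (∫_{ℝ^n} |t^i| f_0(t) dt < ∞ for all |i| ≤ 2k), ∫_{ℝ^n} t^i f_0(t) dt = g_i for all i with |i| < 2k, and ∫_{ℝ^n} t_ι^{2k} f_0(t) dt ≤ g_{2k·e_ι} for every 1 ≤ ι ≤ n. -/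
open MeasureTheory Real ENNReal

/-- The monomial `t ^ i = t₁^{i₁} ⋯ tₙ^{iₙ}`. -/
noncomputable def monom {n : ℕ} (i : Fin n → ℕ) (t : Fin n → ℝ) : ℝ := ∏ j, t j ^ i j

/-- The reference density `ρ(t) = e^{−‖t‖^{2k}} = e^{−(∑_j t_j²)^k}` on `ℝⁿ`. -/
noncomputable def rhoRef {n : ℕ} (k : ℕ) (t : Fin n → ℝ) : ℝ :=
  Real.exp (-(∑ j, t j ^ 2) ^ k)

/-- The concave Lagrangian functional on `T = ℝⁿ`:
`L(λ) = ∑_{|i|≤2k} g_i λ_i − ∫_{ℝⁿ} e^{∑ λ_i t^i} ρ(t) dt`, with values in `ℝ ∪ {−∞}`. -/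
noncomputable def Lag {n : ℕ} (I : Finset (Fin n → ℕ))
    (g : (Fin n → ℕ) → ℝ) (ρ : (Fin n → ℝ) → ℝ) (lam : {i // i ∈ I} → ℝ) : EReal :=
  ((∑ i ∈ I.attach, g i.1 * lam i : ℝ) : EReal)
    - ((∫⁻ t, ENNReal.ofReal (Real.exp (∑ i ∈ I.attach, lam i * monom i.1 t) * ρ t)) : EReal)

/-- The candidate maximum-entropy density `f₀(t) = e^{∑ λ*_i t^i} ρ(t)`. -/
noncomputable def maxEntDens {n : ℕ} (k : ℕ) (I : Finset (Fin n → ℕ))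
    (lamstar : {i // i ∈ I} → ℝ) (t : Fin n → ℝ) : ℝ :=
  Real.exp (∑ i ∈ I.attach, lamstar i * monom i.1 t) * rhoRef k t

section aux

open Filter

variable {n : ℕ}

lemma monom_continuous (i : Fin n → ℕ) : Continuous (monom i) := by
  unfold monom
  exact continuous_finset_prod _ fun j _ => (continuous_apply j).pow _

lemma maxEntDens_continuous (k : ℕ) (I : Finset (Fin n → ℕ)) (lamstar : {i // i ∈ I} → ℝ) :
    Continuous (maxEntDens k I lamstar) := by
  unfold maxEntDens rhoRef
  apply Continuous.mul
  · exact (continuous_finset_sum _ fun i _ => continuous_const.mul (monom_continuous i.1)).rexp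
  · exact ((continuous_finset_sum _ fun j _ => (continuous_apply j).pow 2).pow k).neg.rexp

lemma maxEntDens_pos (k : ℕ) (I : Finset (Fin n → ℕ)) (lamstar : {i // i ∈ I} → ℝ)
    (t : Fin n → ℝ) : 0 < maxEntDens k I lamstar t :=
  mul_pos (Real.exp_pos _) (Real.exp_pos _)

/-- convexity of exp -/
lemma exp_convex_aux (x s : ℝ) (h0 : 0 ≤ s) (h1 : s ≤ 1) :
    Real.exp (s * x) ≤ s * Real.exp x + (1 - s) := by
  have := convexOn_exp.2 (Set.mem_univ x) (Set.mem_univ 0) h0 (by linarith : (0:ℝ) ≤ 1 - s)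
    (by ring)
  simpa using this

lemma slope_bound_aux (x : ℝ) (m : ℕ) :
    ((m : ℝ) + 1) * (Real.exp (x / ((m : ℝ) + 1)) - 1) ≤ Real.exp x - 1 := by
  have hm : (0:ℝ) < (m : ℝ) + 1 := by positivity
  have h0 : (0:ℝ) ≤ 1 / ((m:ℝ)+1) := by positivity
  have h1 : 1 / ((m:ℝ)+1) ≤ 1 := by
    rw [div_le_one hm]; linarith [Nat.cast_nonneg (α := ℝ) m]
  have := exp_convex_aux x (1 / ((m:ℝ)+1)) h0 h1
  have hx : (1 / ((m:ℝ)+1)) * x = x / ((m:ℝ)+1) := by ring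
  rw [hx] at this
  have : Real.exp (x / ((m:ℝ)+1)) - 1 ≤ (1 / ((m:ℝ)+1)) * (Real.exp x - 1) := by linarith
  calc ((m : ℝ) + 1) * (Real.exp (x / ((m : ℝ) + 1)) - 1)
      ≤ ((m : ℝ) + 1) * ((1 / ((m:ℝ)+1)) * (Real.exp x - 1)) := by
        exact mul_le_mul_of_nonneg_left this (le_of_lt hm)
    _ = Real.exp x - 1 := by field_simp

lemma tendsto_slope_exp_aux (x : ℝ) :
    Tendsto (fun m : ℕ => ((m : ℝ) + 1) * (Real.exp (x / ((m : ℝ) + 1)) - 1)) atTop (nhds x) := by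
  have hd : HasDerivAt (fun s : ℝ => Real.exp (s * x)) x 0 := by
    have h1 : HasDerivAt (fun s : ℝ => s * x) x 0 := by
      simpa using (hasDerivAt_id (0:ℝ)).mul_const x
    have := (Real.hasDerivAt_exp ((0:ℝ) * x)).comp 0 h1
    rw [zero_mul, Real.exp_zero, one_mul] at this
    exact this
  have hslope := hasDerivAt_iff_tendsto_slope.mp hd
  have hseq : Tendsto (fun m : ℕ => 1 / ((m:ℝ)+1)) atTop (nhdsWithin 0 {(0:ℝ)}ᶜ) := by
    apply tendsto_nhdsWithin_of_tendsto_nhds_of_eventually_within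
    · exact tendsto_one_div_add_atTop_nhds_zero_nat
    · filter_upwards with m
      simp only [Set.mem_compl_iff, Set.mem_singleton_iff]
      positivity
  have := hslope.comp hseq
  apply this.congr
  intro m
  have hm : ((m:ℝ)+1) ≠ 0 := by positivity
  simp only [Function.comp, slope_def_field, Real.exp_zero, div_eq_inv_mul, sub_zero,
    mul_one, zero_mul, inv_inv]

end aux

section polybounds

variable {n : ℕ}

lemma monom_abs_le (i : Fin n → ℕ) (t : Fin n → ℝ) :
    |monom i t| ≤ (1 + ∑ j, |t j|) ^ (∑ m, i m) := by
  have hM1 : (1:ℝ) ≤ 1 + ∑ j, |t j| := by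
    have : (0:ℝ) ≤ ∑ j, |t j| := Finset.sum_nonneg fun j _ => abs_nonneg _
    linarith
  have hMj : ∀ j : Fin n, |t j| ≤ 1 + ∑ j', |t j'| := by
    intro j
    have h1 : |t j| ≤ ∑ j', |t j'| :=
      Finset.single_le_sum (f := fun j' => |t j'|) (fun j' _ => abs_nonneg _) (Finset.mem_univ j)
    linarith
  calc |monom i t| = ∏ j, |t j| ^ i j := by
        rw [monom, Finset.abs_prod]; exact Finset.prod_congr rfl fun j _ => abs_pow _ _
    _ ≤ ∏ j, (1 + ∑ j', |t j'|) ^ i j := by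
        apply Finset.prod_le_prod (fun j _ => pow_nonneg (abs_nonneg _) _)
        exact fun j _ => pow_le_pow_left₀ (abs_nonneg _) (hMj j) _
    _ = (1 + ∑ j, |t j|) ^ (∑ m, i m) := by rw [Finset.prod_pow_eq_pow_sum]

lemma base_pow_le (k : ℕ) (hk : 0 < k) (t : Fin n → ℝ) :
    (1 + ∑ j, |t j|) ^ (2 * k) ≤ ((n:ℝ)+1) ^ (2*k-1) * (1 + ∑ j, (t j) ^ (2*k)) := by
  classical
  set f : Option (Fin n) → ℝ := fun o => Option.elim o 1 (fun j => |t j|) with hf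
  have hfnn : ∀ o ∈ (Finset.univ : Finset (Option (Fin n))), 0 ≤ f o := by
    rintro (_|j) _
    · exact zero_le_one
    · exact abs_nonneg _
  have hsum : ∑ o, f o = 1 + ∑ j, |t j| := by
    rw [Fintype.sum_option]; rfl
  have hsumpow : ∑ o, (f o) ^ (2*k) = 1 + ∑ j, (t j) ^ (2*k) := by
    rw [Fintype.sum_option]
    simp only [hf, Option.elim]
    rw [one_pow]
    congr 1
    exact Finset.sum_congr rfl fun j _ => (even_two_mul k).pow_abs _
  have hcard : (Finset.univ : Finset (Option (Fin n))).card = n + 1 := by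
    simp [Fintype.card_option]
  have h2k : 2*k - 1 + 1 = 2*k := by omega
  have key := pow_sum_div_card_le_sum_pow hfnn (2*k-1)
  rw [hcard, h2k, hsum, hsumpow] at key
  push_cast at key
  have hpos : (0:ℝ) < ((n:ℝ)+1) ^ (2*k-1) := by positivity
  rw [div_le_iff₀ hpos] at key
  linarith [key]

lemma young_pow (a ε : ℝ) (ha : 0 ≤ a) (hε : 0 < ε) (p q : ℕ) (hpq : p < q) :
    a ^ p ≤ ε * a ^ q + (max 1 (1/ε)) ^ p := by
  set R := max 1 (1/ε) with hR
  have hR1 : (1:ℝ) ≤ R := le_max_left _ _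
  have hRε : 1/ε ≤ R := le_max_right _ _
  by_cases haR : a ≤ R
  · have : a ^ p ≤ R ^ p := pow_le_pow_left₀ ha haR p
    have hq : 0 ≤ ε * a ^ q := by positivity
    linarith
  · push_neg at haR
    have ha1 : (1:ℝ) ≤ a := le_trans hR1 haR.le
    have key : a ^ p ≤ ε * a ^ q := by
      have h1 : a ^ q = a ^ p * a ^ (q - p) := by
        rw [← pow_add]; congr 1; omega
      have h2 : R ≤ a ^ (q - p) := by
        calc R ≤ a := haR.le
          _ = a ^ 1 := (pow_one a).symm
          _ ≤ a ^ (q - p) := pow_le_pow_right₀ ha1 (by omega)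
      have h3 : 1/ε ≤ a ^ (q-p) := le_trans hRε h2
      have h4 : 1 ≤ ε * a ^ (q-p) := by
        rw [div_le_iff₀ hε] at h3; linarith [h3]
      calc a ^ p = a ^ p * 1 := (mul_one _).symm
        _ ≤ a ^ p * (ε * a ^ (q-p)) := by
            apply mul_le_mul_of_nonneg_left h4 (pow_nonneg ha p)
        _ = ε * a ^ q := by rw [h1]; ring
    have : (0:ℝ) ≤ R ^ p := by positivity
    linarith

/-- uniform bound: `|t^i| ≤ D⬝(1 + ∑ t_m^{2k})` for `|i| ≤ 2k`. -/
lemma monom_le_moments (k : ℕ) (hk : 0 < k) (i : Fin n → ℕ) (hi : ∑ m, i m ≤ 2*k)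
    (t : Fin n → ℝ) :
    |monom i t| ≤ ((n:ℝ)+1) ^ (2*k-1) * (1 + ∑ j, (t j) ^ (2*k)) := by
  have h1 := monom_abs_le i t
  have hM1 : (1:ℝ) ≤ 1 + ∑ j, |t j| := by
    have : (0:ℝ) ≤ ∑ j, |t j| := Finset.sum_nonneg fun j _ => abs_nonneg _
    linarith
  have h2 : (1 + ∑ j, |t j|) ^ (∑ m, i m) ≤ (1 + ∑ j, |t j|) ^ (2*k) :=
    pow_le_pow_right₀ hM1 hi
  exact le_trans h1 (le_trans h2 (base_pow_le k hk t))

/-- ε-bound: for `|i| < 2k`, `|t^i| ≤ ε ∑ t_m^{2k} + C(ε)`. -/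
lemma monom_le_eps_moments (k : ℕ) (hk : 0 < k) (i : Fin n → ℕ) (hi : ∑ m, i m < 2*k)
    (ε : ℝ) (hε : 0 < ε) :
    ∃ C : ℝ, ∀ t : Fin n → ℝ, |monom i t| ≤ ε * (∑ j, (t j) ^ (2*k)) + C := by
  set D : ℝ := ((n:ℝ)+1) ^ (2*k-1) with hD
  have hDpos : 0 < D := by positivity
  set ε' : ℝ := ε / D with hε'
  have hε'pos : 0 < ε' := by positivity
  refine ⟨ε + (max 1 (1/ε')) ^ (∑ m, i m), fun t => ?_⟩
  have hM0 : (0:ℝ) ≤ 1 + ∑ j, |t j| := by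
    have : (0:ℝ) ≤ ∑ j, |t j| := Finset.sum_nonneg fun j _ => abs_nonneg _
    linarith
  have h1 := monom_abs_le i t
  have h2 := young_pow (1 + ∑ j, |t j|) ε' hM0 hε'pos (∑ m, i m) (2*k) hi
  have h3 := base_pow_le k hk t
  have h4 : ε' * (1 + ∑ j, |t j|) ^ (2*k) ≤ ε' * (D * (1 + ∑ j, (t j) ^ (2*k))) :=
    mul_le_mul_of_nonneg_left h3 hε'pos.le
  have h5 : ε' * (D * (1 + ∑ j, (t j) ^ (2*k))) = ε * (1 + ∑ j, (t j) ^ (2*k)) := by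
    rw [hε']
    field_simp
  linarith [h1, h2, h4]

end polybounds

section master

open Filter

variable {n : ℕ}

lemma ereal_coe_ennreal_toReal {x : ℝ≥0∞} (h : x ≠ ⊤) : ((x.toReal : ℝ) : EReal) = (x : EReal) := by
  rw [← EReal.toReal_coe_ennreal, EReal.coe_toReal (by simp [h]) (EReal.coe_ennreal_ne_bot x)]

lemma ereal_sub_le_sub {a b : ℝ} {A B : ℝ≥0∞} (hA : A ≠ ⊤) (hB : B ≠ ⊤)
    (h : (a : EReal) - (A : EReal) ≤ (b : EReal) - (B : EReal)) :
    a - A.toReal ≤ b - B.toReal := by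
  rw [← ereal_coe_ennreal_toReal hA, ← ereal_coe_ennreal_toReal hB, ← EReal.coe_sub,
    ← EReal.coe_sub, EReal.coe_le_coe_iff] at h
  exact h

lemma master_lemma (k : ℕ) (I : Finset (Fin n → ℕ))
    (g : (Fin n → ℕ) → ℝ) (lamstar : {i // i ∈ I} → ℝ)
    (hfin : Lag I g (rhoRef k) lamstar ≠ ⊥)
    (hmax : ∀ lam : {i // i ∈ I} → ℝ, Lag I g (rhoRef k) lam ≤ Lag I g (rhoRef k) lamstar)
    (w : (Fin n → ℕ) → ℝ) (C : ℝ)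
    (hbd : ∀ t, (∑ j ∈ I, w j * monom j t) ≤ C) :
    Integrable (fun t => (∑ j ∈ I, w j * monom j t) * maxEntDens k I lamstar t) ∧
      (∑ j ∈ I, g j * w j) ≤ ∫ t, (∑ j ∈ I, w j * monom j t) * maxEntDens k I lamstar t := by
  set f₀ : (Fin n → ℝ) → ℝ := maxEntDens k I lamstar with hf₀
  set h : (Fin n → ℝ) → ℝ := fun t => ∑ j ∈ I, w j * monom j t with hh
  have hf₀c : Continuous f₀ := maxEntDens_continuous k I lamstar
  have hf₀pos : ∀ t, 0 < f₀ t := maxEntDens_pos k I lamstar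
  have hhc : Continuous h :=
    continuous_finset_sum _ fun j _ => continuous_const.mul (monom_continuous j)
  set A : ℝ≥0∞ := ∫⁻ t, ENNReal.ofReal (f₀ t) with hA
  set b : ℝ := ∑ i ∈ I.attach, g i.1 * lamstar i with hb
  have hLagstar : Lag I g (rhoRef k) lamstar = (b : EReal) - (A : EReal) := rfl
  have hAne : A ≠ ⊤ := by
    intro htop
    apply hfin
    rw [hLagstar, htop, EReal.coe_ennreal_top]
    simp
  have hf₀int : Integrable f₀ := by
    refine ⟨hf₀c.aestronglyMeasurable, ?_⟩
    rw [hasFiniteIntegral_iff_ofReal (ae_of_all _ fun t => (hf₀pos t).le)]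
    exact lt_top_iff_ne_top.mpr hAne
  have hIf₀ : ∫ t, f₀ t = A.toReal :=
    integral_eq_lintegral_of_nonneg_ae (ae_of_all _ fun t => (hf₀pos t).le)
      hf₀c.aestronglyMeasurable
  set G : ℝ := ∑ j ∈ I, g j * w j with hG
  -- the slope functions
  set u : ℕ → (Fin n → ℝ) → ℝ := fun m t => ((m:ℝ)+1) * (Real.exp (h t / ((m:ℝ)+1)) - 1)
    with hu
  have huc : ∀ m, Continuous (u m) := fun m =>
    continuous_const.mul ((hhc.div_const _).rexp.sub continuous_const)
  -- integrability of exp(h/(m+1)) * f₀ and the key inequality G ≤ ∫ u m * f₀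
  have hkey : ∀ m : ℕ, Integrable (fun t => Real.exp (h t / ((m:ℝ)+1)) * f₀ t) ∧
      G ≤ ∫ t, u m t * f₀ t := by
    intro m
    set sm : ℝ := (m:ℝ)+1 with hsm
    have hsmpos : (0:ℝ) < sm := by positivity
    set s : ℝ := 1/sm with hs
    have hspos : 0 < s := by positivity
    set lam' : {i // i ∈ I} → ℝ := fun j => lamstar j + s * w j.1 with hlam'
    have hsum : ∀ t, ∑ i ∈ I.attach, lam' i * monom i.1 t
        = (∑ i ∈ I.attach, lamstar i * monom i.1 t) + s * h t := by
      intro t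
      calc ∑ i ∈ I.attach, lam' i * monom i.1 t
          = ∑ i ∈ I.attach, (lamstar i * monom i.1 t + s * (w i.1 * monom i.1 t)) := by
            refine Finset.sum_congr rfl fun i _ => ?_; rw [hlam']; ring
        _ = (∑ i ∈ I.attach, lamstar i * monom i.1 t)
              + s * ∑ i ∈ I.attach, w i.1 * monom i.1 t := by
            rw [Finset.sum_add_distrib, Finset.mul_sum]
        _ = (∑ i ∈ I.attach, lamstar i * monom i.1 t) + s * h t := by
            rw [Finset.sum_attach I (fun j => w j * monom j t)]
    have hexp : ∀ t, Real.exp (∑ i ∈ I.attach, lam' i * monom i.1 t) * rhoRef k t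
        = Real.exp (s * h t) * f₀ t := by
      intro t
      rw [hsum t, Real.exp_add, hf₀, maxEntDens]
      ring
    have hglin : ∑ i ∈ I.attach, g i.1 * lam' i = b + s * G := by
      calc ∑ i ∈ I.attach, g i.1 * lam' i
          = ∑ i ∈ I.attach, (g i.1 * lamstar i + s * (g i.1 * w i.1)) := by
            refine Finset.sum_congr rfl fun i _ => ?_; rw [hlam']; ring
        _ = b + s * ∑ i ∈ I.attach, g i.1 * w i.1 := by
            rw [Finset.sum_add_distrib, Finset.mul_sum, hb]
        _ = b + s * G := by rw [Finset.sum_attach I (fun j => g j * w j), hG]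
    set As : ℝ≥0∞ := ∫⁻ t, ENNReal.ofReal (Real.exp (s * h t) * f₀ t) with hAs
    have hAsle : As ≤ ENNReal.ofReal (Real.exp (s * C)) * A := by
      rw [hAs, hA, ← lintegral_const_mul _ (by
        exact (ENNReal.continuous_ofReal.comp hf₀c).measurable)]
      refine lintegral_mono fun t => ?_
      rw [← ENNReal.ofReal_mul (Real.exp_nonneg _)]
      apply ENNReal.ofReal_le_ofReal
      have : Real.exp (s * h t) ≤ Real.exp (s * C) :=
        Real.exp_le_exp.mpr (mul_le_mul_of_nonneg_left (hbd t) hspos.le)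
      exact mul_le_mul_of_nonneg_right this (hf₀pos t).le
    have hAsne : As ≠ ⊤ := by
      intro htop
      rw [htop, top_le_iff] at hAsle
      rcases ENNReal.mul_eq_top.mp hAsle with ⟨_, h2⟩ | ⟨h1, _⟩
      · exact hAne h2
      · exact absurd h1 ENNReal.ofReal_ne_top
    have hsint : Integrable (fun t => Real.exp (s * h t) * f₀ t) := by
      refine ⟨((continuous_const.mul hhc : Continuous fun t => s * h t).rexp.mul hf₀c).aestronglyMeasurable, ?_⟩
      rw [hasFiniteIntegral_iff_ofReal (ae_of_all _ fun t =>
        mul_nonneg (Real.exp_nonneg _) (hf₀pos t).le)]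
      exact lt_top_iff_ne_top.mpr hAsne
    have hIs : ∫ t, Real.exp (s * h t) * f₀ t = As.toReal :=
      integral_eq_lintegral_of_nonneg_ae (ae_of_all _ fun t =>
        mul_nonneg (Real.exp_nonneg _) (hf₀pos t).le)
        ((continuous_const.mul hhc : Continuous fun t => s * h t).rexp.mul hf₀c).aestronglyMeasurable
    -- use the maximality
    have hmax' := hmax lam'
    have hLag' : Lag I g (rhoRef k) lam' = ((b + s * G : ℝ) : EReal) - (As : EReal) := by
      rw [Lag, hglin, hAs]
      congr 1
      congr 1
      exact lintegral_congr fun t => by rw [hexp t]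
    rw [hLag', hLagstar] at hmax'
    have hre : b + s * G - As.toReal ≤ b - A.toReal := ereal_sub_le_sub hAsne hAne hmax'
    have hsdiff : s * G ≤ ∫ t, (Real.exp (s * h t) - 1) * f₀ t := by
      have : ∫ t, (Real.exp (s * h t) - 1) * f₀ t
          = (∫ t, Real.exp (s * h t) * f₀ t) - ∫ t, f₀ t := by
        rw [← integral_sub hsint hf₀int]
        exact integral_congr_ae (ae_of_all _ fun t => by ring)
      rw [this, hIs, hIf₀]
      linarith
    have e1 : ∀ t, s * h t = h t / sm := by
      intro t; rw [hs]; ring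
    constructor
    · exact hsint.congr (ae_of_all _ fun t => by simp only [e1 t, hsm])
    · have hu_eq : ∀ t, u m t * f₀ t = sm * ((Real.exp (s * h t) - 1) * f₀ t) := by
        intro t
        simp only [hu, e1 t, hsm]
        ring
      have : ∫ t, u m t * f₀ t = sm * ∫ t, (Real.exp (s * h t) - 1) * f₀ t := by
        rw [← integral_const_mul]
        exact integral_congr_ae (ae_of_all _ fun t => hu_eq t)
      rw [this]
      calc G = sm * (s * G) := by rw [hs]; field_simp
        _ ≤ sm * ∫ t, (Real.exp (s * h t) - 1) * f₀ t :=
            mul_le_mul_of_nonneg_left hsdiff hsmpos.le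
  -- bound the slope functions from above
  have hub : ∀ m t, u m t ≤ Real.exp C - 1 := by
    intro m t
    have h1 := slope_bound_aux (h t) m
    have h2 : Real.exp (h t) ≤ Real.exp C := Real.exp_le_exp.mpr (hbd t)
    simp only [hu]
    linarith
  have humint : ∀ m, Integrable (fun t => u m t * f₀ t) := by
    intro m
    have h2 : Integrable (fun t => ((m:ℝ)+1) * (Real.exp (h t/((m:ℝ)+1)) * f₀ t)
        - ((m:ℝ)+1) * f₀ t) := (((hkey m).1).const_mul _).sub (hf₀int.const_mul _)
    exact h2.congr (ae_of_all _ fun t => by simp only [hu]; ring)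
  have hqint : ∀ m, Integrable (fun t => (Real.exp C - u m t) * f₀ t) := by
    intro m
    have h2 : Integrable (fun t => Real.exp C * f₀ t - u m t * f₀ t) :=
      (hf₀int.const_mul _).sub (humint m)
    exact h2.congr (ae_of_all _ fun t => by ring)
  set B : ℝ := (∫ t, Real.exp C * f₀ t) - G with hB
  have hqB : ∀ m, ∫ t, (Real.exp C - u m t) * f₀ t ≤ B := by
    intro m
    have h2 : ∫ t, (Real.exp C - u m t) * f₀ t
        = (∫ t, Real.exp C * f₀ t) - ∫ t, u m t * f₀ t := by
      rw [← integral_sub (hf₀int.const_mul (Real.exp C)) (humint m)]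
      exact integral_congr_ae (ae_of_all _ fun t => by ring)
    rw [h2, hB]
    exact sub_le_sub_left (hkey m).2 _
  have hqnn : ∀ m t, 0 ≤ (Real.exp C - u m t) * f₀ t := by
    intro m t
    apply mul_nonneg _ (hf₀pos t).le
    linarith [hub m t, Real.exp_pos C]
  have hB0 : 0 ≤ B := le_trans (integral_nonneg fun t => hqnn 0 t) (hqB 0)
  have hlimpt : ∀ t, Filter.Tendsto
      (fun m => ENNReal.ofReal ((Real.exp C - u m t) * f₀ t)) atTop
      (nhds (ENNReal.ofReal ((Real.exp C - h t) * f₀ t))) := by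
    intro t
    apply (ENNReal.continuous_ofReal.tendsto _).comp
    exact (tendsto_const_nhds.sub (tendsto_slope_exp_aux (h t))).mul tendsto_const_nhds
  have hfatou : ∫⁻ t, ENNReal.ofReal ((Real.exp C - h t) * f₀ t) ≤ ENNReal.ofReal B := by
    have hmeas : ∀ m, Measurable fun t => ENNReal.ofReal ((Real.exp C - u m t) * f₀ t) :=
      fun m => (ENNReal.continuous_ofReal.comp
        ((continuous_const.sub (huc m)).mul hf₀c)).measurable
    have h1 : ∫⁻ t, ENNReal.ofReal ((Real.exp C - h t) * f₀ t)
        = ∫⁻ t, Filter.liminf (fun m => ENNReal.ofReal ((Real.exp C - u m t) * f₀ t)) atTop :=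
      lintegral_congr fun t => ((hlimpt t).liminf_eq).symm
    rw [h1]
    refine le_trans (lintegral_liminf_le hmeas) ?_
    have h2 : ∀ m, (∫⁻ t, ENNReal.ofReal ((Real.exp C - u m t) * f₀ t))
        ≤ ENNReal.ofReal B := by
      intro m
      rw [← ofReal_integral_eq_lintegral_ofReal (hqint m) (ae_of_all _ (hqnn m))]
      exact ENNReal.ofReal_le_ofReal (hqB m)
    calc Filter.liminf _ atTop ≤ Filter.liminf (fun _ : ℕ => ENNReal.ofReal B) atTop :=
          Filter.liminf_le_liminf (Filter.Eventually.of_forall h2)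
      _ = ENNReal.ofReal B := Filter.liminf_const _
  have hCexp : ∀ t, h t ≤ Real.exp C := fun t =>
    le_trans (hbd t) (by linarith [Real.add_one_le_exp C])
  have hqnn' : ∀ t, 0 ≤ (Real.exp C - h t) * f₀ t := fun t =>
    mul_nonneg (by linarith [hCexp t]) (hf₀pos t).le
  have hqinf : Integrable (fun t => (Real.exp C - h t) * f₀ t) := by
    refine ⟨((continuous_const.sub hhc).mul hf₀c).aestronglyMeasurable, ?_⟩
    rw [hasFiniteIntegral_iff_ofReal (ae_of_all _ hqnn')]
    exact lt_of_le_of_lt hfatou ENNReal.ofReal_lt_top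
  have hqle : ∫ t, (Real.exp C - h t) * f₀ t ≤ B := by
    rw [integral_eq_lintegral_of_nonneg_ae (ae_of_all _ hqnn')
      ((continuous_const.sub hhc).mul hf₀c).aestronglyMeasurable]
    calc _ ≤ (ENNReal.ofReal B).toReal := ENNReal.toReal_mono ENNReal.ofReal_ne_top hfatou
      _ = B := ENNReal.toReal_ofReal hB0
  have hhint : Integrable (fun t => h t * f₀ t) := by
    have h2 : Integrable (fun t => Real.exp C * f₀ t - (Real.exp C - h t) * f₀ t) :=
      (hf₀int.const_mul _).sub hqinf
    exact h2.congr (ae_of_all _ fun t => by ring)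
  refine ⟨hhint, ?_⟩
  have hsplit : ∫ t, h t * f₀ t
      = (∫ t, Real.exp C * f₀ t) - ∫ t, (Real.exp C - h t) * f₀ t := by
    rw [← integral_sub (hf₀int.const_mul (Real.exp C)) hqinf]
    exact integral_congr_ae (ae_of_all _ fun t => by ring)
  have hfin2 : G ≤ ∫ t, h t * f₀ t := by
    rw [hsplit]
    rw [hB] at hqle
    linarith
  exact hfin2

end master

/-- For `T = ℝⁿ`, `I = {i : |i| ≤ 2k}` and `ρ(t) = e^{−‖t‖^{2k}}`, if `λ*` is a point where
the Lagrangian attains a finite global maximum, then `f₀ = e^{∑ λ*_i t^i} ρ` has finite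
moments of all orders `≤ 2k`, its moments of order `< 2k` equal `g_i`, and its pure moments
of order `2k` are at most `g_{2k·e_ι}`. -/
theorem stmt_12 {n : ℕ} (k : ℕ) (hk : 0 < k)
    (I : Finset (Fin n → ℕ)) (hI : ∀ i : Fin n → ℕ, i ∈ I ↔ ∑ m, i m ≤ 2 * k)
    (g : (Fin n → ℕ) → ℝ) (hg0 : g 0 = 1)
    (lamstar : {i // i ∈ I} → ℝ)
    (hfin : Lag I g (rhoRef k) lamstar ≠ ⊥)
    (hmax : ∀ lam : {i // i ∈ I} → ℝ, Lag I g (rhoRef k) lam ≤ Lag I g (rhoRef k) lamstar) :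
    (∀ i ∈ I, Integrable (fun t => monom i t * maxEntDens k I lamstar t)) ∧
    (∀ i ∈ I, ∑ m, i m < 2 * k → ∫ t, monom i t * maxEntDens k I lamstar t = g i) ∧
    (∀ ι : Fin n, ∫ t, t ι ^ (2 * k) * maxEntDens k I lamstar t ≤
      g (fun m => if m = ι then 2 * k else 0)) := by
  classical
  set f₀ : (Fin n → ℝ) → ℝ := maxEntDens k I lamstar with hf₀def
  have hf₀c : Continuous f₀ := maxEntDens_continuous k I lamstar
  have hf₀pos : ∀ t, 0 < f₀ t := maxEntDens_pos k I lamstar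
  set P : Fin n → (Fin n → ℕ) := fun ι m => if m = ι then 2 * k else 0 with hP
  have hPmem : ∀ ι, P ι ∈ I := by
    intro ι
    rw [hI]
    simp [hP, Finset.sum_ite_eq']
  have hPmonom : ∀ ι t, monom (P ι) t = t ι ^ (2*k) := by
    intro ι t
    rw [monom]
    rw [Finset.prod_eq_single ι]
    · simp [hP]
    · intro m _ hm
      simp [hP, hm]
    · simp
  have hPinj : Function.Injective P := by
    intro ι ι' hPP
    by_contra hne
    have := congrFun hPP ι
    simp [hP, hne] at this
    omega
  -- integrability of f₀ itself
  have hf₀int : Integrable f₀ := by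
    set A : ℝ≥0∞ := ∫⁻ t, ENNReal.ofReal (f₀ t) with hA
    have hLagstar : Lag I g (rhoRef k) lamstar
        = ((∑ i ∈ I.attach, g i.1 * lamstar i : ℝ) : EReal) - (A : EReal) := rfl
    have hAne : A ≠ ⊤ := by
      intro htop
      apply hfin
      rw [hLagstar, htop, EReal.coe_ennreal_top]
      simp
    refine ⟨hf₀c.aestronglyMeasurable, ?_⟩
    rw [hasFiniteIntegral_iff_ofReal (ae_of_all _ fun t => (hf₀pos t).le)]
    exact lt_top_iff_ne_top.mpr hAne
  -- pure moments: integrability and upper bound (conclusion 3)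
  have hmom : ∀ ι : Fin n, Integrable (fun t => t ι ^ (2*k) * f₀ t) ∧
      ∫ t, t ι ^ (2*k) * f₀ t ≤ g (P ι) := by
    intro ι
    set w : (Fin n → ℕ) → ℝ := fun j => if j = P ι then (-1 : ℝ) else 0 with hw
    have hsum_w : ∀ t, ∑ j ∈ I, w j * monom j t = -(t ι ^ (2*k)) := by
      intro t
      have e1 : ∀ j, w j * monom j t = if j = P ι then -(monom j t) else 0 := by
        intro j
        by_cases h1 : j = P ι <;> simp [hw, h1]
      rw [Finset.sum_congr rfl fun j _ => e1 j]
      rw [Finset.sum_ite_eq' I (P ι) (fun j => -(monom j t)), if_pos (hPmem ι), hPmonom]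
    have hglin : ∑ j ∈ I, g j * w j = -(g (P ι)) := by
      have e1 : ∀ j, g j * w j = if j = P ι then -(g j) else 0 := by
        intro j
        by_cases h1 : j = P ι <;> simp [hw, h1]
      rw [Finset.sum_congr rfl fun j _ => e1 j]
      rw [Finset.sum_ite_eq' I (P ι) (fun j => -(g j)), if_pos (hPmem ι)]
    have hbd : ∀ t, ∑ j ∈ I, w j * monom j t ≤ (0:ℝ) := by
      intro t
      rw [hsum_w t]
      have : (0:ℝ) ≤ t ι ^ (2*k) := (even_two_mul k).pow_nonneg _
      linarith
    obtain ⟨hint, hle⟩ := master_lemma k I g lamstar hfin hmax w 0 hbd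
    have hint' : Integrable (fun t => t ι ^ (2*k) * f₀ t) := by
      have h2 : Integrable (fun t => -(t ι ^ (2*k) * f₀ t)) :=
        hint.congr (ae_of_all _ fun t => by simp only [hsum_w t]; ring)
      exact h2.neg.congr (ae_of_all _ fun t => by simp)
    refine ⟨hint', ?_⟩
    have heq : ∫ t, (∑ j ∈ I, w j * monom j t) * f₀ t = -∫ t, t ι ^ (2*k) * f₀ t := by
      rw [← integral_neg]
      exact integral_congr_ae (ae_of_all _ fun t => by simp only [hsum_w t]; ring)
    rw [heq, hglin] at hle
    linarith
  -- conclusion 1 : integrability of all moments of order ≤ 2k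
  have hSint : Integrable (fun t => (∑ ι, t ι ^ (2*k)) * f₀ t) := by
    have h2 : Integrable (fun t => ∑ ι, t ι ^ (2*k) * f₀ t) :=
      integrable_finset_sum _ fun ι _ => (hmom ι).1
    exact h2.congr (ae_of_all _ fun t => by simp only [Finset.sum_mul])
  have conc1 : ∀ i ∈ I, Integrable (fun t => monom i t * f₀ t) := by
    intro i hi
    set D : ℝ := ((n:ℝ)+1) ^ (2*k-1) with hD
    have hDpos : (0:ℝ) < D := by positivity
    have hbound : Integrable (fun t => D * f₀ t + D * ((∑ ι, t ι ^ (2*k)) * f₀ t)) :=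
      (hf₀int.const_mul D).add (hSint.const_mul D)
    refine Integrable.mono' hbound ((monom_continuous i).mul hf₀c).aestronglyMeasurable
      (ae_of_all _ fun t => ?_)
    have h1 := monom_le_moments k hk i ((hI i).mp hi) t
    have h2 : ‖monom i t * f₀ t‖ = |monom i t| * f₀ t := by
      rw [norm_mul, Real.norm_eq_abs, Real.norm_eq_abs, abs_of_pos (hf₀pos t)]
    rw [h2]
    have h3 : |monom i t| * f₀ t ≤ (D * (1 + ∑ ι, t ι ^ (2*k))) * f₀ t :=
      mul_le_mul_of_nonneg_right h1 (hf₀pos t).le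
    calc |monom i t| * f₀ t ≤ (D * (1 + ∑ ι, t ι ^ (2*k))) * f₀ t := h3
      _ = D * f₀ t + D * ((∑ ι, t ι ^ (2*k)) * f₀ t) := by ring
  -- auxiliary: sum over image of P
  have himg : ∀ (F : (Fin n → ℕ) → ℝ),
      ∑ j ∈ I, (if j ∈ Finset.image P Finset.univ then F j else 0) = ∑ ι, F (P ι) := by
    intro F
    rw [← Finset.sum_filter]
    have hfilter : I.filter (· ∈ Finset.image P Finset.univ) = Finset.image P Finset.univ := by
      ext j
      simp only [Finset.mem_filter, Finset.mem_image, Finset.mem_univ, true_and]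
      constructor
      · rintro ⟨-, h⟩; exact h
      · rintro ⟨ι, rfl⟩; exact ⟨hPmem ι, ⟨ι, rfl⟩⟩
    rw [hfilter, Finset.sum_image (fun ι _ ι' _ h => hPinj h)]
  have hSval : ∫ t, (∑ ι, t ι ^ (2*k)) * f₀ t = ∑ ι, ∫ t, t ι ^ (2*k) * f₀ t := by
    rw [← integral_finset_sum _ fun ι _ => (hmom ι).1]
    exact integral_congr_ae (ae_of_all _ fun t => by simp only [Finset.sum_mul])
  -- conclusion 2
  have conc2 : ∀ i ∈ I, (∑ m, i m < 2 * k) → ∫ t, monom i t * f₀ t = g i := by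
    intro i hi hlt
    set SI : ℝ := ∑ ι, ∫ t, t ι ^ (2*k) * f₀ t with hSI
    set G' : ℝ := ∑ ι, g (P ι) with hG'
    have hK0 : SI ≤ G' := Finset.sum_le_sum fun ι _ => (hmom ι).2
    have hstep : ∀ ε : ℝ, 0 < ε → |(∫ t, monom i t * f₀ t) - g i| ≤ ε * (G' - SI) := by
      intro ε hε
      obtain ⟨Cε, hCε⟩ := monom_le_eps_moments k hk i hlt ε hε
      have key : ∀ c : ℝ, |c| = 1 →
          c * g i - ε * G' ≤ c * (∫ t, monom i t * f₀ t) - ε * SI := by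
        intro c hc
        set w : (Fin n → ℕ) → ℝ := fun j => (if j = i then c else 0)
          - ε * (if j ∈ Finset.image P Finset.univ then 1 else 0) with hw
        have hsum_w : ∀ t, ∑ j ∈ I, w j * monom j t
            = c * monom i t - ε * ∑ ι, t ι ^ (2*k) := by
          intro t
          have e1 : ∀ j, w j * monom j t = (if j = i then c * monom j t else 0)
              - ε * (if j ∈ Finset.image P Finset.univ then monom j t else 0) := by
            intro j
            simp only [hw]
            split_ifs <;> ring
          rw [Finset.sum_congr rfl fun j _ => e1 j, Finset.sum_sub_distrib]
          rw [Finset.sum_ite_eq' I i (fun j => c * monom j t), if_pos hi]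
          rw [← Finset.mul_sum, himg (fun j => monom j t)]
          congr 2
          exact Finset.sum_congr rfl fun ι _ => hPmonom ι t
        have hglin : ∑ j ∈ I, g j * w j = c * g i - ε * G' := by
          have e1 : ∀ j, g j * w j = (if j = i then c * g j else 0)
              - ε * (if j ∈ Finset.image P Finset.univ then g j else 0) := by
            intro j
            simp only [hw]
            split_ifs <;> ring
          rw [Finset.sum_congr rfl fun j _ => e1 j, Finset.sum_sub_distrib]
          rw [Finset.sum_ite_eq' I i (fun j => c * g j), if_pos hi]
          rw [← Finset.mul_sum, himg g, hG']
        have hbd : ∀ t, ∑ j ∈ I, w j * monom j t ≤ Cε := by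
          intro t
          rw [hsum_w t]
          have h1 := hCε t
          have h2 : c * monom i t ≤ |monom i t| := by
            calc c * monom i t ≤ |c * monom i t| := le_abs_self _
              _ = |monom i t| := by rw [abs_mul, hc, one_mul]
          linarith
        obtain ⟨hint, hle⟩ := master_lemma k I g lamstar hfin hmax w Cε hbd
        rw [hglin] at hle
        have heq : ∫ t, (∑ j ∈ I, w j * monom j t) * f₀ t
            = c * (∫ t, monom i t * f₀ t) - ε * SI := by
          have hint1 : Integrable (fun t => c * (monom i t * f₀ t)) :=
            (conc1 i hi).const_mul c
          have hint2 : Integrable (fun t => ε * ((∑ ι, t ι ^ (2*k)) * f₀ t)) :=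
            hSint.const_mul ε
          have e2 : ∫ t, (∑ j ∈ I, w j * monom j t) * f₀ t
              = ∫ t, (c * (monom i t * f₀ t) - ε * ((∑ ι, t ι ^ (2*k)) * f₀ t)) := by
            refine integral_congr_ae (ae_of_all _ fun t => ?_)
            simp only [hsum_w t]; ring
          rw [e2, integral_sub hint1 hint2, integral_const_mul, integral_const_mul, hSval]
        rw [heq] at hle
        exact hle
      have k1 := key 1 (by norm_num)
      have k2 := key (-1) (by norm_num)
      rw [abs_le]
      constructor <;> linarith
    -- conclude equality by letting ε → 0
    have habs : |(∫ t, monom i t * f₀ t) - g i| ≤ 0 := by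
      by_contra habs
      push_neg at habs
      set d : ℝ := |(∫ t, monom i t * f₀ t) - g i| with hd
      have hKpos : (0:ℝ) < G' - SI + 1 := by linarith
      have hεpos : 0 < d / (2 * (G' - SI + 1)) := by positivity
      have := hstep _ hεpos
      have h2 : d / (2 * (G' - SI + 1)) * (G' - SI) ≤ d / 2 := by
        rw [div_mul_eq_mul_div, div_le_div_iff₀ (by positivity) (by norm_num)]
        nlinarith
      have : d ≤ d / 2 := le_trans this h2
      linarith
    have hzero : (∫ t, monom i t * f₀ t) - g i = 0 :=
      abs_eq_zero.mp (le_antisymm habs (abs_nonneg _))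
    linarith
  refine ⟨conc1, conc2, fun ι => (hmom ι).2⟩
end

section
/- Let n, k ∈ ℕ, T = ℝ^n, I = {i ∈ ℤ_+^n : |i| ≤ 2k}, ρ(t) = e^{−‖t‖^{2k}}, and let g = (g_i)_{i∈I} be real numbers with g_0 = 1. Suppose λ* ∈ ℝ^N (N = card I) is a point at which the functional L(λ) = Σ_{|i|≤2k} g_i λ_i − ∫_{ℝ^n} e^{Σ_{|i|≤2k} λ_i t^i} ρ(t) dt attains its finite global maximum, and suppose moreover that the homogeneous polynomial p(t) = Σ_{|i|=2k} λ*_i t^i satisfies p(t) < 0 for all t ≠ 0. Then λ* lies in the interior of the effective domain dom L = {λ ∈ ℝ^N : L(λ) > −∞}, and the function f_0(t) = e^{Σ_{|i|≤2k} λ*_i t^i} ρ(t) is a solution of the full truncated moment problem: ∫_{ℝ^n} t^i f_0(t) dt = g_i for all i with |i| ≤ 2k. -/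
open MeasureTheory Real ENNReal

noncomputable def Ssum {n : ℕ} (t : Fin n → ℝ) : ℝ := ∑ j, t j ^ 2

noncomputable def Esum {n : ℕ} (I : Finset (Fin n → ℕ)) (lam : {i // i ∈ I} → ℝ)
    (t : Fin n → ℝ) : ℝ := ∑ i ∈ I.attach, lam i * monom i.1 t

lemma Ssum_nonneg {n : ℕ} (t : Fin n → ℝ) : 0 ≤ Ssum t :=
  Finset.sum_nonneg fun j _ => sq_nonneg _

lemma one_le_sqrtS {n : ℕ} (t : Fin n → ℝ) : 1 ≤ Real.sqrt (1 + Ssum t) :=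
  Real.one_le_sqrt.2 (by linarith [Ssum_nonneg t])

lemma sq_sqrtS {n : ℕ} (t : Fin n → ℝ) : Real.sqrt (1 + Ssum t) ^ 2 = 1 + Ssum t :=
  Real.sq_sqrt (by linarith [Ssum_nonneg t])

lemma continuous_monom {n : ℕ} (i : Fin n → ℕ) : Continuous (monom i) := by
  unfold monom
  exact continuous_finset_prod _ fun j _ => (continuous_apply j).pow _

lemma pow_sub_pow_le' {a b : ℝ} (hb : 0 ≤ b) (hab : b ≤ a) :
    ∀ m : ℕ, a ^ (m + 1) - b ^ (m + 1) ≤ (m + 1) * a ^ m * (a - b) := by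
  have ha : 0 ≤ a := hb.trans hab
  intro m
  induction m with
  | zero => simp
  | succ m ih =>
    have h1 : a ^ (m + 2) - b ^ (m + 2) = a * (a ^ (m+1) - b ^ (m+1)) + b ^ (m+1) * (a - b) := by
      ring
    rw [h1]
    have h2 : a * (a ^ (m+1) - b ^ (m+1)) ≤ a * ((m + 1) * a ^ m * (a - b)) :=
      mul_le_mul_of_nonneg_left ih ha
    have h3 : b ^ (m+1) * (a - b) ≤ a ^ (m+1) * (a - b) :=
      mul_le_mul_of_nonneg_right (pow_le_pow_left₀ hb hab _) (by linarith)
    have : a * ((m + 1) * a ^ m * (a - b)) + a ^ (m+1) * (a-b)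
        = ((m:ℝ) + 1 + 1) * a ^ (m+1) * (a - b) := by ring
    push_cast
    nlinarith [pow_nonneg ha m, pow_nonneg ha (m+1)]

lemma monom_sq_le {n : ℕ} (i : Fin n → ℕ) (t : Fin n → ℝ) :
    monom i t ^ 2 ≤ (1 + ∑ j, t j ^ 2) ^ (∑ m, i m) := by
  have hS : (0:ℝ) ≤ ∑ j, t j ^ 2 := Finset.sum_nonneg fun j _ => sq_nonneg _
  have h1 : monom i t ^ 2 = ∏ j, (t j ^ 2) ^ i j := by
    rw [monom, ← Finset.prod_pow]
    congr 1; ext j; rw [← pow_mul, ← pow_mul, Nat.mul_comm]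
  rw [h1, ← Finset.prod_pow_eq_pow_sum]
  refine Finset.prod_le_prod (fun j _ => pow_nonneg (sq_nonneg _) _) fun j _ => ?_
  refine pow_le_pow_left₀ (sq_nonneg _) ?_ _
  have : t j ^ 2 ≤ ∑ l, t l ^ 2 :=
    Finset.single_le_sum (f := fun l => t l ^ 2) (fun l _ => sq_nonneg _) (Finset.mem_univ j)
  linarith

lemma abs_monom_le {n : ℕ} (i : Fin n → ℕ) (t : Fin n → ℝ) {d : ℕ} (hd : ∑ m, i m ≤ d) :
    |monom i t| ≤ Real.sqrt (1 + Ssum t) ^ d := by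
  simp only [Ssum]
  have hS : (0:ℝ) ≤ ∑ j, t j ^ 2 := Finset.sum_nonneg fun j _ => sq_nonneg _
  have h1 : (0:ℝ) ≤ 1 + ∑ j, t j ^ 2 := by linarith
  have hx1 : 1 ≤ Real.sqrt (1 + ∑ j, t j ^ 2) :=
    Real.one_le_sqrt.2 (by linarith)
  have hxsq : Real.sqrt (1 + ∑ j, t j ^ 2) ^ 2 = 1 + ∑ j, t j ^ 2 := Real.sq_sqrt h1
  refine le_of_pow_le_pow_left₀ two_ne_zero (pow_nonneg (by linarith) d) ?_
  rw [sq_abs]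
  calc monom i t ^ 2 ≤ (1 + ∑ j, t j ^ 2) ^ (∑ m, i m) := monom_sq_le i t
    _ ≤ (1 + ∑ j, t j ^ 2) ^ d := pow_le_pow_right₀ (by linarith) hd
    _ = (Real.sqrt (1 + ∑ j, t j ^ 2) ^ d) ^ 2 := by
        rw [← pow_mul, Nat.mul_comm, pow_mul, hxsq]

lemma integrable_gauss (n : ℕ) :
    Integrable (fun t : Fin n → ℝ => Real.exp (-Ssum t / 2)) := by
  simp only [Ssum]
  have : (fun t : Fin n → ℝ => Real.exp (-(∑ j, t j ^ 2) / 2))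
      = fun t : Fin n → ℝ => ∏ j, Real.exp (-(1/2) * t j ^ 2) := by
    ext t
    rw [← Real.exp_sum]
    congr 1
    rw [neg_div, Finset.sum_div, ← Finset.sum_neg_distrib]
    apply Finset.sum_congr rfl
    intro j _; ring
  rw [this]
  exact Integrable.fintype_prod fun j => integrable_exp_neg_mul_sq (by norm_num)

lemma master_bound (k : ℕ) (hk : 1 ≤ k) (C : ℝ) (hC : 0 ≤ C) :
    ∃ B : ℝ, 0 < B ∧ ∀ x : ℝ, 1 ≤ x →
      (1 + x ^ (2 * k)) * Real.exp (C * x ^ (2 * k - 1) - (3 / 4) * x ^ (2 * k))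
        ≤ B * Real.exp (-(x ^ 2 - 1) / 2) := by
  set C₃ : ℝ := C + 2 * k with hC₃
  have hC₃0 : 0 ≤ C₃ := by positivity
  set R : ℝ := 4 * C₃ + 1 with hR
  clear_value C₃ R
  have hR1 : 1 ≤ R := by simp only [hR]; linarith
  refine ⟨2 * Real.exp (C₃ * R ^ (2 * k - 1)), by positivity, fun x hx => ?_⟩
  have hx0 : 0 < x := lt_of_lt_of_le one_pos hx
  have h2k1 : 2 * k - 1 + 1 = 2 * k := by omega
  -- reduce to a bound without the gaussian factor
  rw [show C * x ^ (2 * k - 1) - 3 / 4 * x ^ (2 * k)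
      = (C * x ^ (2 * k - 1) - 3 / 4 * x ^ (2 * k) + (x ^ 2 - 1) / 2) + (-(x ^ 2 - 1) / 2) by ring,
    Real.exp_add, ← mul_assoc]
  refine mul_le_mul_of_nonneg_right ?_ (Real.exp_pos _).le
  -- key estimates
  have hpow1 : (1:ℝ) ≤ x ^ (2 * k) := one_le_pow₀ hx
  have hself : x ≤ x ^ (2 * k - 1) := le_self_pow₀ hx (by omega)
  have hxe : x ^ (2 * k) ≤ Real.exp (2 * k * x ^ (2 * k - 1)) := by
    have h1 : Real.log x ≤ x ^ (2 * k - 1) :=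
      (Real.log_le_sub_one_of_pos hx0).trans (by linarith)
    have h2 : x ^ (2 * k) = Real.exp ((2 * k : ℝ) * Real.log x) := by
      rw [show (2:ℝ) * (k:ℝ) = ((2 * k : ℕ) : ℝ) by push_cast; ring,
        ← Real.log_pow, Real.exp_log (pow_pos hx0 _)]
    rw [h2]
    exact Real.exp_le_exp.2 (mul_le_mul_of_nonneg_left h1 (by positivity))
  have hsq : x ^ 2 ≤ x ^ (2 * k) := pow_le_pow_right₀ hx (by omega)
  have harg : C * x ^ (2 * k - 1) - 3 / 4 * x ^ (2 * k) + (x ^ 2 - 1) / 2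
      ≤ C * x ^ (2 * k - 1) - (1 / 4) * x ^ (2 * k) := by linarith
  have hfinal : C₃ * x ^ (2 * k - 1) - (1 / 4) * x ^ (2 * k) ≤ C₃ * R ^ (2 * k - 1) := by
    rcases le_total x R with h | h
    · have : C₃ * x ^ (2 * k - 1) ≤ C₃ * R ^ (2 * k - 1) :=
        mul_le_mul_of_nonneg_left (pow_le_pow_left₀ hx0.le h _) hC₃0
      linarith [pow_nonneg hx0.le (2 * k)]
    · have hc : C₃ ≤ x / 4 := by simp only [hR] at h; linarith
      have h2 : C₃ * x ^ (2 * k - 1) ≤ (x / 4) * x ^ (2 * k - 1) :=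
        mul_le_mul_of_nonneg_right hc (pow_nonneg hx0.le _)
      have h3 : (x / 4) * x ^ (2 * k - 1) = (1 / 4) * x ^ (2 * k) := by
        conv_rhs => rw [← h2k1]
        rw [pow_succ]; ring
      have h4 : 0 ≤ C₃ * R ^ (2 * k - 1) := by positivity
      linarith
  calc (1 + x ^ (2 * k)) * Real.exp (C * x ^ (2 * k - 1) - 3 / 4 * x ^ (2 * k) + (x ^ 2 - 1) / 2)
      ≤ (2 * x ^ (2 * k)) * Real.exp (C * x ^ (2 * k - 1) - (1 / 4) * x ^ (2 * k)) := by
        refine mul_le_mul (by linarith) (Real.exp_le_exp.2 harg) (Real.exp_pos _).le (by positivity)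
    _ ≤ (2 * Real.exp (2 * k * x ^ (2 * k - 1)))
          * Real.exp (C * x ^ (2 * k - 1) - (1 / 4) * x ^ (2 * k)) := by
        refine mul_le_mul_of_nonneg_right (by linarith) (Real.exp_pos _).le
    _ = 2 * Real.exp (C₃ * x ^ (2 * k - 1) - (1 / 4) * x ^ (2 * k)) := by
        rw [mul_assoc, ← Real.exp_add]; congr 2; simp only [hC₃]; ring
    _ ≤ 2 * Real.exp (C₃ * R ^ (2 * k - 1)) := by
        exact mul_le_mul_of_nonneg_left (Real.exp_le_exp.2 hfinal) (by norm_num)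

lemma key_pointwise {n : ℕ} (k : ℕ) (hk : 0 < k)
    (I : Finset (Fin n → ℕ)) (hI : ∀ i : Fin n → ℕ, i ∈ I ↔ ∑ m, i m ≤ 2 * k)
    (lamstar : {i // i ∈ I} → ℝ)
    (hpneg : ∀ t : Fin n → ℝ, t ≠ 0 →
      (∑ i ∈ I.attach.filter (fun i => ∑ m, i.1 m = 2 * k), lamstar i * monom i.1 t) < 0) :
    ∃ ε B : ℝ, 0 < ε ∧ 0 < B ∧ ∀ lam : {i // i ∈ I} → ℝ,
      (∀ i, |lam i - lamstar i| ≤ ε) → ∀ t : Fin n → ℝ,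
      (1 + Real.sqrt (1 + Ssum t) ^ (2 * k)) * Real.exp (Esum I lam t - Ssum t ^ k)
        ≤ B * Real.exp (-Ssum t / 2) := by
  set N : ℕ := I.card with hN
  set ε : ℝ := 1 / (4 * (N + 1)) with hεdef
  have hε : 0 < ε := by positivity
  set Cr : ℝ := ∑ i ∈ I.attach, |lamstar i| with hCr
  have hCr0 : 0 ≤ Cr := Finset.sum_nonneg fun i _ => abs_nonneg _
  obtain ⟨B, hB, hmaster⟩ := master_bound k hk (Cr + k) (by positivity)
  refine ⟨ε, B, hε, hB, fun lam hlam t => ?_⟩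
  set x : ℝ := Real.sqrt (1 + Ssum t) with hxdef
  have hx1 : 1 ≤ x := one_le_sqrtS t
  have hx0 : 0 ≤ x := by linarith
  have hx2 : x ^ 2 = 1 + Ssum t := sq_sqrtS t
  have hS0 : 0 ≤ Ssum t := Ssum_nonneg t
  -- top-degree part is ≤ 0
  have htop : (∑ i ∈ I.attach.filter (fun i => ∑ m, i.1 m = 2 * k), lamstar i * monom i.1 t)
      ≤ 0 := by
    by_cases ht : t = 0
    · subst ht
      refine le_of_eq (Finset.sum_eq_zero fun i hi => ?_)
      have hi2 : ∑ m, i.1 m = 2 * k := (Finset.mem_filter.1 hi).2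
      have : ∃ m, i.1 m ≠ 0 := by
        by_contra h
        push_neg at h
        have : ∑ m, i.1 m = 0 := Finset.sum_eq_zero fun m _ => h m
        omega
      obtain ⟨m, hm⟩ := this
      have : monom i.1 (0 : Fin n → ℝ) = 0 := by
        rw [monom]
        exact Finset.prod_eq_zero (Finset.mem_univ m) (by simp [zero_pow hm])
      rw [this, mul_zero]
    · exact (hpneg t ht).le
  -- lower order part
  have hrest : (∑ i ∈ I.attach.filter (fun i => ¬(∑ m, i.1 m = 2 * k)), lamstar i * monom i.1 t)
      ≤ Cr * x ^ (2 * k - 1) := by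
    calc (∑ i ∈ I.attach.filter (fun i => ¬(∑ m, i.1 m = 2 * k)), lamstar i * monom i.1 t)
        ≤ ∑ i ∈ I.attach.filter (fun i => ¬(∑ m, i.1 m = 2 * k)),
            |lamstar i| * x ^ (2 * k - 1) := by
          refine Finset.sum_le_sum fun i hi => ?_
          have hile : ∑ m, i.1 m ≤ 2 * k := (hI i.1).1 i.2
          have hine : ¬(∑ m, i.1 m = 2 * k) := (Finset.mem_filter.1 hi).2
          have hd : ∑ m, i.1 m ≤ 2 * k - 1 := by omega
          calc lamstar i * monom i.1 t ≤ |lamstar i * monom i.1 t| := le_abs_self _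
            _ = |lamstar i| * |monom i.1 t| := abs_mul _ _
            _ ≤ |lamstar i| * x ^ (2 * k - 1) :=
                mul_le_mul_of_nonneg_left (abs_monom_le i.1 t hd) (abs_nonneg _)
      _ ≤ ∑ i ∈ I.attach, |lamstar i| * x ^ (2 * k - 1) := by
          refine Finset.sum_le_sum_of_subset_of_nonneg (Finset.filter_subset _ _)
            fun i _ _ => by positivity
      _ = Cr * x ^ (2 * k - 1) := by rw [hCr, Finset.sum_mul]
  have hEstar : Esum I lamstar t ≤ Cr * x ^ (2 * k - 1) := by
    rw [Esum, ← Finset.sum_filter_add_sum_filter_not I.attach (fun i => ∑ m, i.1 m = 2 * k)]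
    linarith
  -- perturbation
  have hpert : Esum I lam t ≤ Esum I lamstar t + (1 / 4) * x ^ (2 * k) := by
    have hdiff : Esum I lam t - Esum I lamstar t
        = ∑ i ∈ I.attach, (lam i - lamstar i) * monom i.1 t := by
      rw [Esum, Esum, ← Finset.sum_sub_distrib]
      exact Finset.sum_congr rfl fun i _ => by ring
    have hterm : ∀ i ∈ I.attach, (lam i - lamstar i) * monom i.1 t ≤ ε * x ^ (2 * k) := by
      intro i _
      calc (lam i - lamstar i) * monom i.1 t ≤ |(lam i - lamstar i) * monom i.1 t| :=
            le_abs_self _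
        _ = |lam i - lamstar i| * |monom i.1 t| := abs_mul _ _
        _ ≤ ε * x ^ (2 * k) :=
            mul_le_mul (hlam i) (abs_monom_le i.1 t ((hI i.1).1 i.2)) (abs_nonneg _) hε.le
    have hsum : ∑ i ∈ I.attach, (lam i - lamstar i) * monom i.1 t
        ≤ N * (ε * x ^ (2 * k)) := by
      have := Finset.sum_le_card_nsmul I.attach _ _ hterm
      rwa [Finset.card_attach, nsmul_eq_mul, ← hN] at this
    have hNε : (N : ℝ) * ε ≤ 1 / 4 := by
      rw [hεdef, mul_one_div, div_le_div_iff₀ (by positivity) (by norm_num)]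
      push_cast; linarith
    have : (N : ℝ) * (ε * x ^ (2 * k)) ≤ (1 / 4) * x ^ (2 * k) := by
      rw [← mul_assoc]
      exact mul_le_mul_of_nonneg_right hNε (by positivity)
    linarith
  -- S^k lower bound
  have hSk : x ^ (2 * k) - (k : ℝ) * x ^ (2 * k - 1) ≤ Ssum t ^ k := by
    have h1 := pow_sub_pow_le' hS0 (by linarith [hx2] : Ssum t ≤ x ^ 2) (k - 1)
    have hk1 : k - 1 + 1 = k := Nat.succ_pred_eq_of_pos hk
    rw [hk1] at h1
    have h2 : (x ^ 2) ^ k = x ^ (2 * k) := by rw [← pow_mul, Nat.mul_comm]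
    have h3 : (x ^ 2) ^ (k - 1) = x ^ (2 * k - 2) := by rw [← pow_mul]; congr 1; omega
    have h4 : x ^ (2 * k - 2) ≤ x ^ (2 * k - 1) := pow_le_pow_right₀ hx1 (by omega)
    have h5 : x ^ 2 - Ssum t = 1 := by linarith
    rw [h2, h3, h5, mul_one] at h1
    have hcast : ((k - 1 : ℕ) : ℝ) + 1 = (k : ℝ) := by
      have : ((k - 1 : ℕ) : ℝ) = (k : ℝ) - 1 := by
        push_cast [Nat.cast_sub hk]; ring
      linarith
    rw [hcast] at h1
    nlinarith [(Nat.cast_pos (α := ℝ)).2 hk]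
  -- assemble
  have hexp_arg : Esum I lam t - Ssum t ^ k
      ≤ (Cr + k) * x ^ (2 * k - 1) - (3 / 4) * x ^ (2 * k) := by linarith
  calc (1 + x ^ (2 * k)) * Real.exp (Esum I lam t - Ssum t ^ k)
      ≤ (1 + x ^ (2 * k)) * Real.exp ((Cr + k) * x ^ (2 * k - 1) - (3 / 4) * x ^ (2 * k)) := by
        refine mul_le_mul_of_nonneg_left (Real.exp_le_exp.2 hexp_arg) (by positivity)
    _ ≤ B * Real.exp (-(x ^ 2 - 1) / 2) := hmaster x hx1
    _ = B * Real.exp (-Ssum t / 2) := by rw [hx2]; ring_nf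

/-- For `T = ℝⁿ`, `I = {i : |i| ≤ 2k}` and `ρ(t) = e^{−‖t‖^{2k}}`, if `λ*` is a point where
the Lagrangian attains a finite global maximum and the homogeneous top-degree part
`p(t) = ∑_{|i|=2k} λ*_i t^i` is strictly negative off the origin, then `λ*` is interior to
the effective domain of `L` and `f₀ = e^{∑ λ*_i t^i} ρ` solves the full truncated moment
problem `∫ t^i f₀ = g_i` for all `|i| ≤ 2k`. -/
theorem stmt_13 {n : ℕ} (k : ℕ) (hk : 0 < k)
    (I : Finset (Fin n → ℕ)) (hI : ∀ i : Fin n → ℕ, i ∈ I ↔ ∑ m, i m ≤ 2 * k)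
    (g : (Fin n → ℕ) → ℝ) (hg0 : g 0 = 1)
    (lamstar : {i // i ∈ I} → ℝ)
    (hfin : Lag I g (rhoRef k) lamstar ≠ ⊥)
    (hmax : ∀ lam : {i // i ∈ I} → ℝ, Lag I g (rhoRef k) lam ≤ Lag I g (rhoRef k) lamstar)
    (hpneg : ∀ t : Fin n → ℝ, t ≠ 0 →
      (∑ i ∈ I.attach.filter (fun i => ∑ m, i.1 m = 2 * k), lamstar i * monom i.1 t) < 0) :
    lamstar ∈ interior {lam : {i // i ∈ I} → ℝ | Lag I g (rhoRef k) lam ≠ ⊥} ∧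
    (∀ i ∈ I, Integrable (fun t => monom i t * maxEntDens k I lamstar t)) ∧
    (∀ i ∈ I, ∫ t, monom i t * maxEntDens k I lamstar t = g i) := by
  obtain ⟨ε, B, hε, hB, hbound⟩ := key_pointwise k hk I hI lamstar hpneg
  -- basic facts
  have hfeq : ∀ (lam : {i // i ∈ I} → ℝ) (t : Fin n → ℝ),
      Real.exp (∑ i ∈ I.attach, lam i * monom i.1 t) * rhoRef k t
        = Real.exp (Esum I lam t - Ssum t ^ k) := by
    intro lam t
    rw [rhoRef, ← Real.exp_add, Esum, Ssum, sub_eq_add_neg]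
  have hxpos : ∀ t : Fin n → ℝ, (0:ℝ) ≤ Real.sqrt (1 + Ssum t) ^ (2 * k) :=
    fun t => pow_nonneg (Real.sqrt_nonneg _) _
  have hfbound : ∀ (lam : {i // i ∈ I} → ℝ), (∀ i, |lam i - lamstar i| ≤ ε) →
      ∀ t : Fin n → ℝ, Real.exp (Esum I lam t - Ssum t ^ k) ≤ B * Real.exp (-Ssum t / 2) := by
    intro lam hlam t
    refine le_trans ?_ (hbound lam hlam t)
    nlinarith [Real.exp_pos (Esum I lam t - Ssum t ^ k), hxpos t]
  have hmbound : ∀ i ∈ I, ∀ (lam : {i // i ∈ I} → ℝ), (∀ i, |lam i - lamstar i| ≤ ε) →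
      ∀ t : Fin n → ℝ, |monom i t| * Real.exp (Esum I lam t - Ssum t ^ k)
        ≤ B * Real.exp (-Ssum t / 2) := by
    intro i hi lam hlam t
    refine le_trans ?_ (hbound lam hlam t)
    have h1 : |monom i t| ≤ Real.sqrt (1 + Ssum t) ^ (2 * k) := abs_monom_le i t ((hI i).1 hi)
    nlinarith [Real.exp_pos (Esum I lam t - Ssum t ^ k), hxpos t]
  have hBint : Integrable (fun t : Fin n → ℝ => B * Real.exp (-Ssum t / 2)) :=
    (integrable_gauss n).const_mul B
  have hcont : ∀ lam : {i // i ∈ I} → ℝ,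
      Continuous (fun t : Fin n → ℝ => Real.exp (Esum I lam t - Ssum t ^ k)) := by
    intro lam
    refine Real.continuous_exp.comp (Continuous.sub ?_ ?_)
    · exact continuous_finset_sum _ fun i _ => continuous_const.mul (continuous_monom i.1)
    · exact (continuous_finset_sum _ fun j _ => (continuous_apply j).pow 2).pow k
  have hint : ∀ (lam : {i // i ∈ I} → ℝ), (∀ i, |lam i - lamstar i| ≤ ε) →
      Integrable (fun t : Fin n → ℝ => Real.exp (Esum I lam t - Ssum t ^ k)) := by
    intro lam hlam
    refine hBint.mono (hcont lam).aestronglyMeasurable (ae_of_all _ fun t => ?_)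
    simp only [Real.norm_eq_abs, Real.abs_exp, abs_mul,
      abs_of_nonneg hB.le]
    exact hfbound lam hlam t
  have hintm : ∀ i ∈ I, ∀ (lam : {i // i ∈ I} → ℝ), (∀ i, |lam i - lamstar i| ≤ ε) →
      Integrable (fun t : Fin n → ℝ => monom i t * Real.exp (Esum I lam t - Ssum t ^ k)) := by
    intro i hi lam hlam
    refine hBint.mono ((continuous_monom i).mul (hcont lam)).aestronglyMeasurable
      (ae_of_all _ fun t => ?_)
    simp only [Real.norm_eq_abs, Real.abs_exp, abs_mul,
      abs_of_nonneg hB.le]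
    exact hmbound i hi lam hlam t
  -- Lag as a real number on the good region
  have hLag : ∀ (lam : {i // i ∈ I} → ℝ), (∀ i, |lam i - lamstar i| ≤ ε) →
      Lag I g (rhoRef k) lam
        = (((∑ i ∈ I.attach, g i.1 * lam i)
            - ∫ t, Real.exp (Esum I lam t - Ssum t ^ k) : ℝ) : EReal) := by
    intro lam hlam
    rw [Lag]
    have h1 : (∫⁻ t, ENNReal.ofReal (Real.exp (∑ i ∈ I.attach, lam i * monom i.1 t)
        * rhoRef k t))
        = ENNReal.ofReal (∫ t, Real.exp (Esum I lam t - Ssum t ^ k)) := by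
      calc (∫⁻ t, ENNReal.ofReal (Real.exp (∑ i ∈ I.attach, lam i * monom i.1 t) * rhoRef k t))
          = ∫⁻ t, ENNReal.ofReal (Real.exp (Esum I lam t - Ssum t ^ k)) :=
            lintegral_congr fun t => congrArg ENNReal.ofReal (hfeq lam t)
        _ = ENNReal.ofReal (∫ t, Real.exp (Esum I lam t - Ssum t ^ k)) :=
            (ofReal_integral_eq_lintegral_ofReal (hint lam hlam)
              (ae_of_all _ fun t => (Real.exp_pos _).le)).symm
    rw [h1, EReal.coe_ennreal_ofReal,
      max_eq_left (integral_nonneg fun t => (Real.exp_pos _).le), ← EReal.coe_sub]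
  have hlamstar_ok : ∀ i : {i // i ∈ I}, |lamstar i - lamstar i| ≤ ε := by
    intro i; simp [hε.le]
  constructor
  · -- interior
    rw [mem_interior_iff_mem_nhds]
    refine Filter.mem_of_superset (Metric.closedBall_mem_nhds lamstar hε) ?_
    intro lam hlam
    have hl : ∀ i, |lam i - lamstar i| ≤ ε := by
      intro i
      have := dist_le_pi_dist lam lamstar i
      rw [Real.dist_eq] at this
      exact this.trans (Metric.mem_closedBall.1 hlam)
    rw [Set.mem_setOf_eq, hLag lam hl]
    exact EReal.coe_ne_bot _
  · -- moment conditions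
    have main : ∀ i₀ ∈ I,
        Integrable (fun t => monom i₀ t * maxEntDens k I lamstar t) ∧
        ∫ t, monom i₀ t * maxEntDens k I lamstar t = g i₀ := by
      intro i₀ hi₀
      set ι : {i // i ∈ I} := ⟨i₀, hi₀⟩ with hι
      set lamf : ℝ → {i // i ∈ I} → ℝ :=
        fun s j => lamstar j + s * (if j = ι then 1 else 0) with hlamf
      have hlamf0 : lamf 0 = lamstar := by
        funext j; simp [hlamf]
      have hlamfok : ∀ s : ℝ, |s| ≤ ε → ∀ j, |lamf s j - lamstar j| ≤ ε := by
        intro s hs j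
        simp only [hlamf, add_sub_cancel_left, abs_mul]
        rcases eq_or_ne j ι with h | h
        · simp [h]; exact hs
        · simp [h]; exact hε.le
      have hEs : ∀ (s : ℝ) (t : Fin n → ℝ),
          Esum I (lamf s) t = Esum I lamstar t + s * monom i₀ t := by
        intro s t
        rw [Esum, Esum]
        have : ∀ j ∈ I.attach, lamf s j * monom j.1 t
            = lamstar j * monom j.1 t + (if j = ι then s * monom j.1 t else 0) := by
          intro j _
          simp only [hlamf]
          split_ifs with h <;> ring
        rw [Finset.sum_congr rfl this, Finset.sum_add_distrib, Finset.sum_ite_eq' I.attach ι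
          (fun j => s * monom j.1 t)]
        simp [Finset.mem_attach, hι]
      have hlin : ∀ s : ℝ, ∑ i ∈ I.attach, g i.1 * lamf s i
          = (∑ i ∈ I.attach, g i.1 * lamstar i) + s * g i₀ := by
        intro s
        have : ∀ j ∈ I.attach, g j.1 * lamf s j
            = g j.1 * lamstar j + (if j = ι then s * g j.1 else 0) := by
          intro j _
          simp only [hlamf]
          split_ifs with h <;> ring
        rw [Finset.sum_congr rfl this, Finset.sum_add_distrib, Finset.sum_ite_eq' I.attach ι
          (fun j => s * g j.1)]
        simp [Finset.mem_attach, hι]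
      set F : ℝ → (Fin n → ℝ) → ℝ :=
        fun s t => Real.exp (Esum I lamstar t + s * monom i₀ t - Ssum t ^ k) with hF
      have hFeq : ∀ s : ℝ, (fun t => Real.exp (Esum I (lamf s) t - Ssum t ^ k)) = F s := by
        intro s; funext t; rw [hF]; rw [hEs s t]
      have hderiv : ∀ (t : Fin n → ℝ) (s : ℝ),
          HasDerivAt (fun u => F u t) (monom i₀ t * F s t) s := by
        intro t s
        have h1 : HasDerivAt (fun u : ℝ => Esum I lamstar t + u * monom i₀ t - Ssum t ^ k)
            (monom i₀ t) s :=
          ((hasDerivAt_mul_const (monom i₀ t)).const_add (Esum I lamstar t)).sub_const _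
        simpa [hF, mul_comm] using h1.exp
      have key := hasDerivAt_integral_of_dominated_loc_of_deriv_le (μ := volume)
        (F := F) (F' := fun s t => monom i₀ t * F s t)
        (bound := fun t => B * Real.exp (-Ssum t / 2)) (x₀ := 0) (Metric.ball_mem_nhds (0:ℝ) hε)
        (Filter.Eventually.of_forall fun s => by
          rw [← hFeq s]; exact (hcont (lamf s)).aestronglyMeasurable)
        (by rw [← hFeq 0, hlamf0]; exact hint lamstar hlamstar_ok)
        (((continuous_monom i₀).mul (by rw [← hFeq 0, hlamf0]; exact hcont lamstar
          : Continuous (F 0))).aestronglyMeasurable)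
        (ae_of_all _ fun t s hs => by
          have hsε : |s| ≤ ε := le_of_lt (by simpa [Real.dist_eq] using Metric.mem_ball.1 hs)
          rw [Real.norm_eq_abs, abs_mul, abs_of_nonneg (Real.exp_pos _).le]
          have := hmbound i₀ hi₀ (lamf s) (hlamfok s hsε) t
          rw [hEs s t] at this
          simpa using this)
        hBint
        (ae_of_all _ fun t s _ => hderiv t s)
      obtain ⟨hFi', hD⟩ := key
      -- the real-valued Lagrangian along the line
      set φ : ℝ → ℝ := fun s => ((∑ i ∈ I.attach, g i.1 * lamstar i) + s * g i₀)
        - ∫ t, F s t with hφ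
      have hφderiv : HasDerivAt φ (g i₀ - ∫ t, monom i₀ t * F 0 t) 0 :=
        (((hasDerivAt_mul_const (g i₀)).const_add _).sub hD)
      have hφmax : IsLocalMax φ 0 := by
        filter_upwards [Metric.ball_mem_nhds (0:ℝ) hε] with s hs
        have hsε : |s| ≤ ε := le_of_lt (by simpa [Real.dist_eq] using Metric.mem_ball.1 hs)
        have h1 := hmax (lamf s)
        rw [hLag (lamf s) (hlamfok s hsε), hLag lamstar hlamstar_ok] at h1
        have h2 := EReal.coe_le_coe_iff.1 h1
        have h3 : φ s = (∑ i ∈ I.attach, g i.1 * lamf s i)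
            - ∫ t, Real.exp (Esum I (lamf s) t - Ssum t ^ k) := by
          rw [hφ, hlin s, hFeq s]
        have h0' : ∀ t : Fin n → ℝ, F 0 t = Real.exp (Esum I lamstar t - Ssum t ^ k) := by
          intro t; simp [hF]
        have h4 : φ 0 = (∑ i ∈ I.attach, g i.1 * lamstar i)
            - ∫ t, Real.exp (Esum I lamstar t - Ssum t ^ k) := by
          simp only [hφ, zero_mul, add_zero, h0']
        rw [h3, h4]
        exact h2
      have hzero : g i₀ - ∫ t, monom i₀ t * F 0 t = 0 :=
        hφmax.hasDerivAt_eq_zero hφderiv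
      have hFm : (fun t => monom i₀ t * F 0 t)
          = fun t => monom i₀ t * maxEntDens k I lamstar t := by
        funext t
        rw [maxEntDens, hfeq lamstar t]
        simp only [hF]
        norm_num
      constructor
      · rw [← hFm]; exact hFi'
      · rw [← hFm]; linarith
    exact ⟨fun i hi => (main i hi).1, fun i hi => (main i hi).2⟩
end
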